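/- Let V₊, V₋ ∈ ℂ with Im V₊ ≠ Im V₋. There exist constants C > 0 and M > 0 such that for all real τ ≥ M and all δ strictly between Im V₊ and Im V₋, writing z = τ + iδ: (i) ||k₊(z) + k₋(z)| − |V₊ − V₋|/(2√τ)| ≤ C·τ^(−3/2); (ii) ||k₊(z) − k₋(z)| − 2√τ| ≤ C·τ^(−1/2); (iii) ||k₊(z)| − √τ| ≤ C·τ^(−1/2) and ||k₋(z)| − √τ| ≤ C·τ^(−1/2). -/

import Mathlib

/-- The principal branch of the complex square root,
holomorphic on `ℂ ∖ (−∞,0]` and positive on `(0,+∞)`. -/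
noncomputable def csqrt (z : ℂ) : ℂ := z ^ (1 / 2 : ℂ)

lemma csqrt_sq (w : ℂ) (hw : w ≠ 0) : csqrt w * csqrt w = w := by
  rw [csqrt, ← Complex.cpow_add _ _ hw]; norm_num

lemma csqrt_re_nonneg (w : ℂ) : 0 ≤ (csqrt w).re := by
  rcases eq_or_ne w 0 with rfl | hw
  · simp [csqrt, Complex.zero_cpow (by norm_num : (1/2 : ℂ) ≠ 0)]
  · rw [csqrt, Complex.cpow_def_of_ne_zero hw, Complex.exp_re]
    apply mul_nonneg (Real.exp_nonneg _)
    apply Real.cos_nonneg_of_mem_Icc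
    have h1 := Complex.arg_le_pi w
    have h2 := Complex.neg_pi_lt_arg w
    constructor <;> simp [Complex.mul_im, Complex.log_im] <;> nlinarith

lemma csqrt_abs (w : ℂ) : ‖(csqrt w)‖ = Real.sqrt (‖w‖) := by
  rcases eq_or_ne w 0 with rfl | hw
  · simp [csqrt, Complex.zero_cpow (by norm_num : (1/2 : ℂ) ≠ 0)]
  · have h : ‖(csqrt w)‖ * ‖(csqrt w)‖ = ‖w‖ := by
      rw [← norm_mul, csqrt_sq w hw]
    rw [← h, Real.sqrt_mul_self (norm_nonneg _)]

lemma csqrt_re_sq (w : ℂ) (hw : w ≠ 0) :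
    ((csqrt w).re)^2 = (‖w‖ + w.re)/2 ∧
    ((csqrt w).im)^2 = (‖w‖ - w.re)/2 := by
  have h1 : (csqrt w).re^2 - (csqrt w).im^2 = w.re := by
    have := congrArg Complex.re (csqrt_sq w hw)
    rw [Complex.mul_re] at this; nlinarith [this]
  have h2 : (csqrt w).re^2 + (csqrt w).im^2 = ‖w‖ := by
    have := Complex.sq_norm (csqrt w)
    rw [Complex.normSq_apply, csqrt_abs] at this
    have h3 : Real.sqrt (‖w‖) ^2 = ‖w‖ :=
      Real.sq_sqrt (norm_nonneg w)
    nlinarith [this]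
  constructor <;> nlinarith

lemma csqrt_im_pos (w : ℂ) (hw : 0 < w.im) : 0 < (csqrt w).im := by
  have hw0 : w ≠ 0 := fun h => by simp [h] at hw
  have h := congrArg Complex.im (csqrt_sq w hw0)
  rw [Complex.mul_im] at h
  have hre := csqrt_re_nonneg w
  nlinarith [h]

lemma csqrt_im_neg (w : ℂ) (hw : w.im < 0) : (csqrt w).im < 0 := by
  have hw0 : w ≠ 0 := fun h => by simp [h] at hw
  have h := congrArg Complex.im (csqrt_sq w hw0)
  rw [Complex.mul_im] at h
  have hre := csqrt_re_nonneg w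
  nlinarith [h]

lemma sqrt_diff (x y : ℝ) (hx : 0 ≤ x) (hy : 0 < y) :
    |Real.sqrt x - Real.sqrt y| ≤ |x - y| / Real.sqrt y := by
  have hsy : 0 < Real.sqrt y := Real.sqrt_pos.2 hy
  have hsum : 0 < Real.sqrt x + Real.sqrt y := by positivity
  have hid : (Real.sqrt x - Real.sqrt y) * (Real.sqrt x + Real.sqrt y) = x - y := by
    nlinarith [Real.sq_sqrt hx, Real.sq_sqrt hy.le]
  have habs : |Real.sqrt x - Real.sqrt y| * (Real.sqrt x + Real.sqrt y) = |x - y| := by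
    rw [← abs_of_pos hsum, ← abs_mul, hid]
  rw [le_div_iff₀ hsy]
  calc |Real.sqrt x - Real.sqrt y| * Real.sqrt y
      ≤ |Real.sqrt x - Real.sqrt y| * (Real.sqrt x + Real.sqrt y) := by
        apply mul_le_mul_of_nonneg_left _ (abs_nonneg _)
        nlinarith [Real.sqrt_nonneg x]
    _ = |x - y| := habs

/-- Per-root estimates. -/
lemma csqrt_est (w : ℂ) (t B : ℝ) (hB : 1 ≤ B) (ht : 4*B ≤ t)
    (hw : ‖(w + t)‖ ≤ B) :
    w ≠ 0 ∧
    |‖(csqrt w)‖ - Real.sqrt t| ≤ B / Real.sqrt t ∧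
    ((csqrt w).re)^2 ≤ B ∧
    Real.sqrt (t - B) ≤ |(csqrt w).im| ∧
    ‖(csqrt w)‖ ≤ Real.sqrt (t + B) := by
  have htpos : 0 < t := by linarith
  have habs1 : ‖w‖ ≤ t + B := by
    calc ‖w‖ = ‖((w + t) + (-t : ℝ))‖ := by push_cast; ring_nf
    _ ≤ ‖(w + t)‖ + ‖((-t : ℝ) : ℂ)‖ := norm_add_le _ _
    _ ≤ B + t := by rw [Complex.norm_real, Real.norm_eq_abs, abs_of_neg (by linarith : -t < 0)]; linarith
    _ = t + B := by ring
  have habs2 : t - B ≤ ‖w‖ := by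
    have : ‖((t : ℝ) : ℂ)‖ ≤ ‖(w + t)‖ + ‖w‖ := by
      calc ‖((t : ℝ) : ℂ)‖ = ‖((w + t) + (-w))‖ := by ring_nf
      _ ≤ ‖(w + t)‖ + ‖(-w)‖ := norm_add_le _ _
      _ = ‖(w + t)‖ + ‖w‖ := by rw [norm_neg]
    rw [Complex.norm_real, Real.norm_eq_abs, abs_of_pos htpos] at this
    linarith
  have hre : |w.re + t| ≤ B := by
    have := Complex.abs_re_le_norm (w + t)
    simpa using le_trans this hw
  have hre1 : w.re ≤ -t + B := by cases' abs_le.1 hre with h1 h2; linarith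
  have hre2 : -t - B ≤ w.re := by cases' abs_le.1 hre with h1 h2; linarith
  have hw0 : w ≠ 0 := by
    intro h; rw [h] at habs2; simp at habs2; linarith
  obtain ⟨hresq, himsq⟩ := csqrt_re_sq w hw0
  refine ⟨hw0, ?_, ?_, ?_, ?_⟩
  · rw [csqrt_abs]
    calc |Real.sqrt (‖w‖) - Real.sqrt t| ≤ |‖w‖ - t| / Real.sqrt t :=
        sqrt_diff _ _ (norm_nonneg w) htpos
    _ ≤ B / Real.sqrt t := by
        gcongr
        exact abs_le.2 ⟨by linarith, by linarith⟩
  · rw [hresq]; linarith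
  · have h1 : t - B ≤ ((csqrt w).im)^2 := by rw [himsq]; linarith
    calc Real.sqrt (t - B) ≤ Real.sqrt (((csqrt w).im)^2) := Real.sqrt_le_sqrt h1
    _ = |(csqrt w).im| := Real.sqrt_sq_eq_abs _
  · rw [csqrt_abs]; exact Real.sqrt_le_sqrt habs1
lemma cabs_sub_le (a b : ℂ) : ‖(a - b)‖ ≤ ‖a‖ + ‖b‖ := by
  calc ‖(a - b)‖ = ‖(a + (-b))‖ := by ring_nf
    _ ≤ ‖a‖ + ‖(-b)‖ := norm_add_le _ _
    _ = ‖a‖ + ‖b‖ := by rw [norm_neg]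
set_option maxHeartbeats 1000000 in
lemma key (Vp Vm : ℂ) (hlt : Vm.im < Vp.im) :
    ∃ C M : ℝ, 0 < C ∧ 0 < M ∧ ∀ τ δ : ℝ, M ≤ τ →
      Vm.im < δ → δ < Vp.im →
      |‖(csqrt (Vp - ((τ : ℂ) + Complex.I * δ)) + csqrt (Vm - ((τ : ℂ) + Complex.I * δ)))‖
          - ‖(Vp - Vm)‖ / (2 * Real.sqrt τ)| ≤ C * τ ^ ((-3 : ℝ) / 2) ∧
      |‖(csqrt (Vp - ((τ : ℂ) + Complex.I * δ)) - csqrt (Vm - ((τ : ℂ) + Complex.I * δ)))‖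
          - 2 * Real.sqrt τ| ≤ C * τ ^ ((-1 : ℝ) / 2) ∧
      |‖(csqrt (Vp - ((τ : ℂ) + Complex.I * δ)))‖ - Real.sqrt τ|
          ≤ C * τ ^ ((-1 : ℝ) / 2) ∧
      |‖(csqrt (Vm - ((τ : ℂ) + Complex.I * δ)))‖ - Real.sqrt τ|
          ≤ C * τ ^ ((-1 : ℝ) / 2) := by
  set B := ‖Vp‖ + ‖Vm‖ + |Vp.im| + |Vm.im| + 1 with hBdef
  clear_value B
  have hB1 : 1 ≤ B := by
    have := norm_nonneg Vp
    have := norm_nonneg Vm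
    have := abs_nonneg Vp.im
    have := abs_nonneg Vm.im
    rw [hBdef]; linarith
  set v := ‖(Vp - Vm)‖ with hvdef
  clear_value v
  have hv : 0 < v := by
    rw [hvdef]
    apply norm_pos_iff.2
    intro hsub
    have : Vp = Vm := sub_eq_zero.1 hsub
    rw [this] at hlt; exact lt_irrefl _ hlt
  refine ⟨(v + 2) * B, 4 * B, by positivity, by positivity, ?_⟩
  intro τ δ hτ hδ1 hδ2
  have hτpos : 0 < τ := lt_of_lt_of_le (by linarith) hτ
  set st := Real.sqrt τ with hstdef
  clear_value st
  have hstpos : 0 < st := hstdef ▸ Real.sqrt_pos.2 hτpos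
  have hst2 : st * st = τ := hstdef ▸ Real.mul_self_sqrt hτpos.le
  -- rpow rewrites
  have hr1 : τ ^ ((-1 : ℝ) / 2) = st⁻¹ := by
    rw [show ((-1 : ℝ)/2) = -(1/2) by norm_num, Real.rpow_neg hτpos.le,
      ← Real.sqrt_eq_rpow, hstdef]
  have hr3 : τ ^ ((-3 : ℝ) / 2) = (st ^ 3)⁻¹ := by
    rw [show ((-3 : ℝ)/2) = -((1/2) * 3) by norm_num, Real.rpow_neg hτpos.le,
      Real.rpow_mul hτpos.le, ← Real.sqrt_eq_rpow, ← hstdef,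
      show (3 : ℝ) = ((3 : ℕ) : ℝ) by norm_num, Real.rpow_natCast]
  -- the two roots
  set wp := Vp - ((τ : ℂ) + Complex.I * δ) with hwpdef
  set wm := Vm - ((τ : ℂ) + Complex.I * δ) with hwmdef
  clear_value wp wm
  have hδabs : |δ| ≤ |Vp.im| + |Vm.im| := by
    rw [abs_le]
    have h1 := neg_abs_le Vm.im
    have h2 := le_abs_self Vp.im
    have h3 := abs_nonneg Vp.im
    have h4 := abs_nonneg Vm.im
    constructor <;> linarith
  have hwpB : ‖(wp + τ)‖ ≤ B := by
    have he : wp + τ = Vp - Complex.I * δ := by rw [hwpdef]; ring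
    rw [he]
    calc ‖(Vp - Complex.I * δ)‖
        ≤ ‖Vp‖ + ‖(Complex.I * δ)‖ := cabs_sub_le _ _
      _ = ‖Vp‖ + |δ| := by
          rw [norm_mul, Complex.norm_I, Complex.norm_real, Real.norm_eq_abs, one_mul]
      _ ≤ B := by
          have h3 := norm_nonneg Vm
          rw [hBdef]; linarith
  have hwmB : ‖(wm + τ)‖ ≤ B := by
    have he : wm + τ = Vm - Complex.I * δ := by rw [hwmdef]; ring
    rw [he]
    calc ‖(Vm - Complex.I * δ)‖
        ≤ ‖Vm‖ + ‖(Complex.I * δ)‖ := cabs_sub_le _ _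
      _ = ‖Vm‖ + |δ| := by
          rw [norm_mul, Complex.norm_I, Complex.norm_real, Real.norm_eq_abs, one_mul]
      _ ≤ B := by
          have h3 := norm_nonneg Vp
          rw [hBdef]; linarith
  obtain ⟨hwp0, hp1, hp2, hp3, hp4⟩ := csqrt_est wp τ B hB1 hτ hwpB
  obtain ⟨hwm0, hm1, hm2, hm3, hm4⟩ := csqrt_est wm τ B hB1 hτ hwmB
  set a := csqrt wp with hadef
  set b := csqrt wm with hbdef
  clear_value a b
  -- signs
  have hwpim : 0 < wp.im := by
    simp only [hwpdef, Complex.sub_im, Complex.add_im, Complex.ofReal_im,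
      Complex.mul_im, Complex.I_re, Complex.I_im, Complex.ofReal_re]
    simp; linarith
  have hwmim : wm.im < 0 := by
    simp only [hwmdef, Complex.sub_im, Complex.add_im, Complex.ofReal_im,
      Complex.mul_im, Complex.I_re, Complex.I_im, Complex.ofReal_re]
    simp; linarith
  have haim : 0 < a.im := hadef ▸ csqrt_im_pos wp hwpim
  have hbim : b.im < 0 := hbdef ▸ csqrt_im_neg wm hwmim
  have haim' : Real.sqrt (τ - B) ≤ a.im := by rwa [abs_of_pos haim] at hp3
  have hbim' : Real.sqrt (τ - B) ≤ -b.im := by rwa [abs_of_neg hbim] at hm3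
  -- sqrt bounds
  have hsq1 : |Real.sqrt (τ - B) - st| ≤ B / st := by
    rw [hstdef]
    have := sqrt_diff (τ - B) τ (by linarith) hτpos
    rw [show |τ - B - τ| = B by rw [abs_of_nonpos (by linarith)]; ring] at this
    exact this
  have hsq2 : |Real.sqrt (τ + B) - st| ≤ B / st := by
    rw [hstdef]
    have := sqrt_diff (τ + B) τ (by linarith) hτpos
    rw [show |τ + B - τ| = B by rw [abs_of_nonneg (by linarith)]; ring] at this
    exact this
  -- q = |a - b| bounds
  set q := ‖(a - b)‖ with hqdef
  clear_value q
  have hqlow : 2 * Real.sqrt (τ - B) ≤ q := by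
    calc 2 * Real.sqrt (τ - B) ≤ a.im - b.im := by linarith
      _ ≤ |(a - b).im| := by rw [Complex.sub_im]; exact le_abs_self _
      _ ≤ q := hqdef ▸ Complex.abs_im_le_norm _
  have hqhigh : q ≤ 2 * Real.sqrt (τ + B) := by
    calc q ≤ ‖a‖ + ‖b‖ := hqdef ▸ cabs_sub_le _ _
      _ ≤ 2 * Real.sqrt (τ + B) := by linarith
  have hqclose : |q - 2 * st| ≤ 2 * B / st := by
    rw [abs_le] at hsq1 hsq2 ⊢
    constructor
    · have : 2 * st - 2 * (B / st) ≤ 2 * Real.sqrt (τ - B) := by linarith [hsq1.1]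
      have h2 : 2 * (B/st) = 2 * B / st := by ring
      linarith
    · have h2 : 2 * (B/st) = 2 * B / st := by ring
      linarith [hsq2.2]
  -- lower bound q ≥ st
  have hτ4 : τ / 4 ≤ τ - B := by linarith
  have hsthalf : st / 2 ≤ Real.sqrt (τ - B) := by
    have h1 : Real.sqrt (τ / 4) ≤ Real.sqrt (τ - B) := Real.sqrt_le_sqrt hτ4
    have h2 : Real.sqrt (τ / 4) = st / 2 := by
      rw [show τ / 4 = τ / 2 ^ 2 by ring, Real.sqrt_div hτpos.le,
        Real.sqrt_sq (by norm_num : (0:ℝ) ≤ 2), hstdef]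
    linarith
  have hqst : st ≤ q := by linarith
  have hqpos : 0 < q := lt_of_lt_of_le hstpos hqst
  -- items (ii)-(iv)
  have hCB : 2 * B ≤ (v + 2) * B := by
    have h := mul_nonneg hv.le (le_trans zero_le_one hB1)
    linarith
  have item2 : |q - 2 * st| ≤ (v + 2) * B * τ ^ ((-1 : ℝ)/2) := by
    rw [hr1]
    calc |q - 2 * st| ≤ 2 * B / st := hqclose
      _ = 2 * B * st⁻¹ := by ring
      _ ≤ (v + 2) * B * st⁻¹ := by
          apply mul_le_mul_of_nonneg_right hCB (by positivity)
  have item3 : |‖a‖ - st| ≤ (v + 2) * B * τ ^ ((-1 : ℝ)/2) := by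
    rw [hr1]
    calc |‖a‖ - st| ≤ B / st := hstdef ▸ hp1
      _ = B * st⁻¹ := by ring
      _ ≤ (v + 2) * B * st⁻¹ := by
          apply mul_le_mul_of_nonneg_right (by nlinarith) (by positivity)
  have item4 : |‖b‖ - st| ≤ (v + 2) * B * τ ^ ((-1 : ℝ)/2) := by
    rw [hr1]
    calc |‖b‖ - st| ≤ B / st := hstdef ▸ hm1
      _ = B * st⁻¹ := by ring
      _ ≤ (v + 2) * B * st⁻¹ := by
          apply mul_le_mul_of_nonneg_right (by nlinarith) (by positivity)
  -- item (i)
  have hab0 : a - b ≠ 0 := fun h => by rw [hqdef, h] at hqpos; simp at hqpos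
  have hident : (a + b) * (a - b) = Vp - Vm := by
    have ha2 : a * a = wp := hadef ▸ csqrt_sq wp hwp0
    have hb2 : b * b = wm := hbdef ▸ csqrt_sq wm hwm0
    have : (a + b) * (a - b) = a * a - b * b := by ring
    rw [this, ha2, hb2, hwpdef, hwmdef]; ring
  have habsab : ‖(a + b)‖ = v / q := by
    have := congrArg (‖·‖) hident
    rw [norm_mul] at this
    rw [← hvdef, ← hqdef] at this
    rw [eq_div_iff hqpos.ne']
    exact this
  have item1 : |‖(a + b)‖ - v / (2 * st)| ≤ (v + 2) * B * τ ^ ((-3 : ℝ)/2) := by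
    rw [hr3, habsab]
    have he : v / q - v / (2 * st) = v * (2 * st - q) / (q * (2 * st)) := by
      field_simp
    rw [he, abs_div, abs_mul, abs_of_pos hv, abs_of_pos (by positivity : (0:ℝ) < q * (2 * st))]
    calc v * |2 * st - q| / (q * (2 * st))
        ≤ v * (2 * B / st) / (st * (2 * st)) := by
          apply div_le_div₀ (by positivity)
          · apply mul_le_mul_of_nonneg_left _ hv.le
            rw [abs_sub_comm]; exact hqclose
          · positivity
          · apply mul_le_mul_of_nonneg_right hqst (by positivity)
      _ = v * B * (st ^ 3)⁻¹ := by
          field_simp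
      _ ≤ (v + 2) * B * (st ^ 3)⁻¹ := by
          apply mul_le_mul_of_nonneg_right (by nlinarith) (by positivity)
  exact ⟨item1, item2, item3, item4⟩

/-- Asymptotics, as `τ → +∞` and uniformly for `δ` strictly between `Im V₊` and `Im V₋`,
of `|k₊(z) + k₋(z)|`, `|k₊(z) − k₋(z)|`, `|k₊(z)|` and `|k₋(z)|`, where `z = τ + iδ`,
`k₊(z) = √(V₊ − z)` and `k₋(z) = √(V₋ − z)`. -/
theorem stmt3 (Vp Vm : ℂ) (h : Vp.im ≠ Vm.im) :
    ∃ C M : ℝ, 0 < C ∧ 0 < M ∧ ∀ τ δ : ℝ, M ≤ τ →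
      min Vp.im Vm.im < δ → δ < max Vp.im Vm.im →
      |‖(csqrt (Vp - ((τ : ℂ) + Complex.I * δ)) + csqrt (Vm - ((τ : ℂ) + Complex.I * δ)))‖
          - ‖(Vp - Vm)‖ / (2 * Real.sqrt τ)| ≤ C * τ ^ ((-3 : ℝ) / 2) ∧
      |‖(csqrt (Vp - ((τ : ℂ) + Complex.I * δ)) - csqrt (Vm - ((τ : ℂ) + Complex.I * δ)))‖
          - 2 * Real.sqrt τ| ≤ C * τ ^ ((-1 : ℝ) / 2) ∧
      |‖(csqrt (Vp - ((τ : ℂ) + Complex.I * δ)))‖ - Real.sqrt τ|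
          ≤ C * τ ^ ((-1 : ℝ) / 2) ∧
      |‖(csqrt (Vm - ((τ : ℂ) + Complex.I * δ)))‖ - Real.sqrt τ|
          ≤ C * τ ^ ((-1 : ℝ) / 2) := by
  rcases lt_or_gt_of_ne h with hlt | hgt
  · -- Vp.im < Vm.im : use key Vm Vp
    obtain ⟨C, M, hC, hM, hk⟩ := key Vm Vp hlt
    refine ⟨C, M, hC, hM, ?_⟩
    intro τ δ hτ h1 h2
    rw [min_eq_left hlt.le] at h1
    rw [max_eq_right hlt.le] at h2
    obtain ⟨i1, i2, i3, i4⟩ := hk τ δ hτ h1 h2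
    refine ⟨?_, ?_, i4, i3⟩
    · rw [add_comm, show Vp - Vm = -(Vm - Vp) by ring, norm_neg]
      exact i1
    · rw [show csqrt (Vp - ((τ : ℂ) + Complex.I * δ)) - csqrt (Vm - ((τ : ℂ) + Complex.I * δ))
          = -(csqrt (Vm - ((τ : ℂ) + Complex.I * δ)) - csqrt (Vp - ((τ : ℂ) + Complex.I * δ))) by ring,
        norm_neg]
      exact i2
  · obtain ⟨C, M, hC, hM, hk⟩ := key Vp Vm hgt
    refine ⟨C, M, hC, hM, ?_⟩
    intro τ δ h1 h2 h3
    rw [min_eq_right hgt.le] at h2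
    rw [max_eq_left hgt.le] at h3
    exact hk τ δ h1 h2 h3
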